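/- Let X₁, X₂ be Dacey subsets of an orthogonality space (O, ⊥) such that every element of X₁ is orthogonal to every element of X₂. If X₁ ∪ X₂ is orthoclosed, then X₁ ∪ X₂ is Dacey. -/

import Mathlib

/-- The polar (orthocomplement) of a subset: all elements orthogonal to every element of `X`. -/
def pol {O : Type*} (r : O → O → Prop) (X : Set O) : Set O := {y | ∀ x ∈ X, r y x}

/-- A set is orthoclosed if it equals its double polar. -/
def IsOC {O : Type*} (r : O → O → Prop) (X : Set O) : Prop := pol r (pol r X) = X

/-- A basis of `X`: a maximal pairwise orthogonal subset of `X`. -/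
def IsBasis {O : Type*} (r : O → O → Prop) (X B : Set O) : Prop :=
  B ⊆ X ∧ B.Pairwise r ∧ ∀ C : Set O, B ⊆ C → C ⊆ X → C.Pairwise r → C = B

/-- A Dacey set: orthoclosed and recovered as the double polar of each of its bases. -/
def IsDacey {O : Type*} (r : O → O → Prop) (X : Set O) : Prop :=
  IsOC r X ∧ ∀ B : Set O, IsBasis r X B → pol r (pol r B) = X

theorem union_of_dacey_is_dacey {O : Type*} (r : O → O → Prop)
    (hsymm : Symmetric r) (hirr : Irreflexive r) (X₁ X₂ : Set O)
    (h₁ : IsDacey r X₁) (h₂ : IsDacey r X₂)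
    (horth : ∀ x ∈ X₁, ∀ y ∈ X₂, r x y)
    (hoc : IsOC r (X₁ ∪ X₂)) :
    IsDacey r (X₁ ∪ X₂) := by
  have pol_anti : ∀ {S T : Set O}, S ⊆ T → pol r T ⊆ pol r S :=
    fun h y hy x hx => hy x (h hx)
  refine ⟨hoc, ?_⟩
  intro B hB
  obtain ⟨hBsub, hBpw, hBmax⟩ := hB
  set B₁ := B ∩ X₁ with hB₁
  set B₂ := B ∩ X₂ with hB₂
  have hdisj : ∀ x, x ∈ X₁ → x ∈ X₂ → False :=
    fun x hx1 hx2 => hirr x (horth x hx1 x hx2)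
  -- B₁ is a basis of X₁
  have hbasis1 : IsBasis r X₁ B₁ := by
    refine ⟨Set.inter_subset_right, hBpw.mono Set.inter_subset_left, ?_⟩
    intro C hBC hCX hCpw
    have hpwU : (C ∪ B₂).Pairwise r := by
      rw [@Set.pairwise_union_of_symm _ r _ _ ⟨hsymm⟩]
      exact ⟨hCpw, hBpw.mono Set.inter_subset_left,
        fun a ha b hb _ => horth a (hCX ha) b hb.2⟩
    have hU : C ∪ B₂ = B := by
      refine hBmax _ ?_ ?_ hpwU
      · intro x hx
        rcases hBsub hx with h | h
        · exact Or.inl (hBC ⟨hx, h⟩)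
        · exact Or.inr ⟨hx, h⟩
      · rintro x (hx | hx)
        · exact Or.inl (hCX hx)
        · exact Or.inr hx.2
    apply Set.Subset.antisymm
    · intro x hx
      have : x ∈ B := hU ▸ Or.inl hx
      exact ⟨this, hCX hx⟩
    · exact hBC
  -- B₂ is a basis of X₂
  have hbasis2 : IsBasis r X₂ B₂ := by
    refine ⟨Set.inter_subset_right, hBpw.mono Set.inter_subset_left, ?_⟩
    intro C hBC hCX hCpw
    have hpwU : (B₁ ∪ C).Pairwise r := by
      rw [@Set.pairwise_union_of_symm _ r _ _ ⟨hsymm⟩]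
      exact ⟨hBpw.mono Set.inter_subset_left, hCpw,
        fun a ha b hb _ => horth a ha.2 b (hCX hb)⟩
    have hU : B₁ ∪ C = B := by
      refine hBmax _ ?_ ?_ hpwU
      · intro x hx
        rcases hBsub hx with h | h
        · exact Or.inl ⟨hx, h⟩
        · exact Or.inr (hBC ⟨hx, h⟩)
      · rintro x (hx | hx)
        · exact Or.inl hx.2
        · exact Or.inr (hCX hx)
    apply Set.Subset.antisymm
    · intro x hx
      have : x ∈ B := hU ▸ Or.inr hx
      exact ⟨this, hCX hx⟩
    · exact hBC
  have hX1 : pol r (pol r B₁) = X₁ := h₁.2 _ hbasis1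
  have hX2 : pol r (pol r B₂) = X₂ := h₂.2 _ hbasis2
  apply Set.Subset.antisymm
  · -- pol pol B ⊆ pol pol (X₁ ∪ X₂) = X₁ ∪ X₂
    have := pol_anti (pol_anti hBsub)
    exact hoc ▸ this
  · rintro x (hx | hx)
    · rw [← hX1] at hx
      exact pol_anti (pol_anti (Set.inter_subset_left : B₁ ⊆ B)) hx
    · rw [← hX2] at hx
      exact pol_anti (pol_anti (Set.inter_subset_left : B₂ ⊆ B)) hx
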